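/- Let G be a DAG with single source and single sink, and let u, v be vertices such that u is neither an ancestor nor a descendant of v. Let G' be obtained from G by adding edge (u,v). If l(u) + r(v) ≤ len(G), where l(u) is the maximum length of a path from the source to u, r(v) is the maximum length of a path from v to the sink, and len(G) is the maximum length of a source-to-sink path, then len(G') = len(G). -/

import Mathlib

/-- A path in a directed graph `E` from vertex `a` to vertex `b`, given as the
list of its vertices, consecutively connected by edges. -/
def IsPathFromTo {V : Type*} (E : V → V → Prop) (a b : V) (p : List V) : Prop :=
  p.Chain' E ∧ p.head? = some a ∧ p.getLast? = some b

/-- The length of a path: the sum of the weights of its vertices. -/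
def plen {V : Type*} (c : V → ℝ) (p : List V) : ℝ := (p.map c).sum

lemma myGetLastAppend {V : Type*} (l₁ l₂ : List V) (h : l₂ ≠ []) :
    (l₁ ++ l₂).getLast? = l₂.getLast? := by
  rw [List.getLast?_append]
  obtain ⟨x, hx⟩ := Option.ne_none_iff_exists'.mp (mt List.getLast?_eq_none_iff.mp h)
  simp [hx]

lemma myHeadAppend {V : Type*} (l₁ l₂ : List V) (h : l₁ ≠ []) :
    (l₁ ++ l₂).head? = l₁.head? := by
  cases l₁ with
  | nil => simp at h
  | cons a t => simp

lemma plen_append {V : Type*} (c : V → ℝ) (p q : List V) :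
    plen c (p ++ q) = plen c p + plen c q := by simp [plen]

lemma plen_cons {V : Type*} (c : V → ℝ) (a : V) (p : List V) :
    plen c (a :: p) = c a + plen c p := by simp [plen]

/-- Splitting an E'-chain at the first use of the new edge. -/
lemma split_newedge {V : Type*} {E : V → V → Prop} {u v : V}
    (hEuv : ¬ E u v) :
    ∀ p : List V, p.Chain' (fun a b => E a b ∨ (a = u ∧ b = v)) →
      p.Chain' E ∨ ∃ p₁ p₂, p = p₁ ++ p₂ ∧ p₁ ≠ [] ∧ p₂ ≠ [] ∧
        p₁.Chain' E ∧ p₁.getLast? = some u ∧ p₂.head? = some v ∧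
        p₂.Chain' (fun a b => E a b ∨ (a = u ∧ b = v)) := by
  intro p
  induction p with
  | nil => intro _; exact Or.inl List.isChain_nil
  | cons a t ih =>
    intro h
    cases t with
    | nil => exact Or.inl (List.isChain_singleton a)
    | cons b t' =>
      unfold List.Chain' at h
      rw [List.isChain_cons_cons] at h
      obtain ⟨hab, ht⟩ := h
      by_cases hE : E a b
      · rcases ih ht with hchain | ⟨p₁, p₂, heq, hp₁ne, hp₂ne, hp₁E, hp₁last, hp₂head, hp₂c⟩
        · exact Or.inl (List.isChain_cons_cons.mpr ⟨hE, hchain⟩)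
        · refine Or.inr ⟨a :: p₁, p₂, by simp [heq], by simp, hp₂ne, ?_, ?_, hp₂head, hp₂c⟩
          · unfold List.Chain'
            rw [List.isChain_cons]
            refine ⟨fun y hy => ?_, hp₁E⟩
            have : p₁.head? = some b := by
              have := myHeadAppend p₁ p₂ hp₁ne
              rw [← heq] at this
              simpa using this.symm
            rw [this] at hy
            simp at hy
            rw [← hy]; exact hE
          · show (([a] ++ p₁).getLast? = some u)
            rw [myGetLastAppend _ _ hp₁ne]; exact hp₁last
      · have huv : a = u ∧ b = v := hab.resolve_left hE
        exact Or.inr ⟨[a], b :: t', rfl, by simp, by simp, List.isChain_singleton a,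
          by simp [huv.1], by simp [huv.2], ht⟩

lemma chain_transGen {V : Type*} {E : V → V → Prop} :
    ∀ (s : List V) (a b : V), s ≠ [] → List.Chain E a s → s.getLast? = some b →
      Relation.TransGen E a b := by
  intro s
  induction s with
  | nil => intro a b h; exact absurd rfl h
  | cons y s' ih =>
    intro a b _ hch hlast
    unfold List.Chain at hch
    rw [List.isChain_cons_cons] at hch
    cases s' with
    | nil =>
      simp at hlast
      exact hlast ▸ Relation.TransGen.single hch.1
    | cons z s'' =>
      have := ih y b (by simp) hch.2 (by
        have := myGetLastAppend [y] (z :: s'') (by simp)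
        simpa using (this ▸ hlast))
      exact Relation.TransGen.head hch.1 this

lemma main_lemma {V : Type*} {E : V → V → Prop} {c : V → ℝ} {src snk u v : V}
    (hc : ∀ w, 0 ≤ c w)
    (hEuv : ¬ E u v) (hvu : ¬ Relation.TransGen E v u)
    {lu rv lenG : ℝ}
    (hlu : ∀ x ∈ {x | ∃ p, IsPathFromTo E src u p ∧ plen c p = x}, x ≤ lu)
    (hrv : ∀ x ∈ {x | ∃ p, IsPathFromTo E v snk p ∧ plen c p = x}, x ≤ rv)
    (hlen : ∀ x ∈ {x | ∃ p, IsPathFromTo E src snk p ∧ plen c p = x}, x ≤ lenG)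
    (hle : lu + rv ≤ lenG) :
    ∀ n (p : List V), p.length ≤ n →
      IsPathFromTo (fun a b => E a b ∨ (a = u ∧ b = v)) src snk p →
      plen c p ≤ lenG ∨ ∃ q, IsPathFromTo (fun a b => E a b ∨ (a = u ∧ b = v)) src snk q ∧
        plen c p < plen c q := by
  intro n
  induction n with
  | zero =>
    intro p hl hp
    have : p = [] := List.length_eq_zero_iff.mp (Nat.le_zero.mp hl)
    rw [this] at hp
    simp [IsPathFromTo] at hp
  | succ n ih =>
    intro p hl hp
    obtain ⟨hchain, hhead, hlast⟩ := hp
    rcases split_newedge hEuv p hchain with hE |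
      ⟨p₁, p₂, heq, hp₁ne, hp₂ne, hp₁E, hp₁last, hp₂head, hp₂c⟩
    · exact Or.inl (hlen _ ⟨p, ⟨hE, hhead, hlast⟩, rfl⟩)
    · have hp₁head : p₁.head? = some src := by
        rw [heq, myHeadAppend _ _ hp₁ne] at hhead; exact hhead
      have hp₂last : p₂.getLast? = some snk := by
        rw [heq, myGetLastAppend _ _ hp₂ne] at hlast; exact hlast
      have hplen1 : plen c p₁ ≤ lu := hlu _ ⟨p₁, ⟨hp₁E, hp₁head, hp₁last⟩, rfl⟩
      rcases split_newedge hEuv p₂ hp₂c with hE2 |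
        ⟨q₁, q₂, heq2, hq₁ne, hq₂ne, hq₁E, hq₁last, hq₂head, hq₂c⟩
      · left
        have h2 : plen c p₂ ≤ rv := hrv _ ⟨p₂, ⟨hE2, hp₂head, hp₂last⟩, rfl⟩
        rw [heq, plen_append]
        linarith
      · have hq₁head : q₁.head? = some v := by
          rw [heq2, myHeadAppend _ _ hq₁ne] at hp₂head; exact hp₂head
        cases q₁ with
        | nil => exact absurd rfl hq₁ne
        | cons x s =>
          cases s with
          | cons z s'' =>
            exfalso
            have hx : x = v := by simpa using hq₁head
            have hlast' : (z :: s'').getLast? = some u := by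
              have h := myGetLastAppend [x] (z :: s'') (by simp)
              simp only [List.singleton_append] at h
              rw [h] at hq₁last; exact hq₁last
            have hch : List.Chain E x (z :: s'') := hq₁E
            exact hvu (hx ▸ chain_transGen (z :: s'') x u (by simp) hch hlast')
          | nil =>
            have hxv : x = v := by simpa using hq₁head
            have hxu : x = u := by simpa using hq₁last
            have huv : u = v := hxu ▸ hxv
            rcases (hc u).lt_or_eq with hpos | hzero
            · -- c u > 0 : build a strictly longer path by inserting another u
              right
              refine ⟨p₁ ++ u :: p₂, ⟨?_, ?_, ?_⟩, ?_⟩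
              · unfold List.Chain'
                rw [List.isChain_append]
                refine ⟨hp₁E.imp (fun a b h => Or.inl h), ?_, ?_⟩
                · rw [List.isChain_cons]
                  refine ⟨fun y hy => ?_, hp₂c⟩
                  rw [hp₂head] at hy
                  simp at hy
                  exact Or.inr ⟨rfl, hy ▸ rfl⟩
                · intro a ha b hb
                  rw [hp₁last] at ha
                  simp at ha hb
                  rw [← ha, ← hb]
                  exact Or.inr ⟨rfl, huv⟩
              · rw [myHeadAppend _ _ hp₁ne]; exact hp₁head
              · rw [myGetLastAppend _ _ (by simp)]
                have h := myGetLastAppend [u] p₂ hp₂ne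
                simp only [List.singleton_append] at h
                rw [h]; exact hp₂last
              · rw [heq, plen_append, plen_append, plen_cons]
                linarith
            · -- c u = 0 : shrink the path and use the induction hypothesis
              have hp'chain : (p₁ ++ q₂).Chain' (fun a b => E a b ∨ (a = u ∧ b = v)) := by
                unfold List.Chain'
                rw [List.isChain_append]
                refine ⟨hp₁E.imp (fun a b h => Or.inl h), hq₂c, ?_⟩
                intro a ha b hb
                rw [hp₁last] at ha
                rw [hq₂head] at hb
                simp at ha hb
                rw [← ha, ← hb]
                exact Or.inr ⟨rfl, rfl⟩
              have hp'head : (p₁ ++ q₂).head? = some src := by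
                rw [myHeadAppend _ _ hp₁ne]; exact hp₁head
              have hq₂last : q₂.getLast? = some snk := by
                rw [heq2] at hp₂last
                have h := myGetLastAppend [x] q₂ hq₂ne
                simp only [List.singleton_append] at h hp₂last
                rw [h] at hp₂last; exact hp₂last
              have hp'last : (p₁ ++ q₂).getLast? = some snk := by
                rw [myGetLastAppend _ _ hq₂ne]; exact hq₂last
              have hlen' : (p₁ ++ q₂).length ≤ n := by
                have hple : p.length = p₁.length + (q₂.length + 1) := by
                  rw [heq, heq2]; simp [List.length_append]
                simp only [List.length_append]
                omega
              have hplen' : plen c p = plen c (p₁ ++ q₂) := by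
                rw [heq, heq2]
                simp [plen, hxu, ← hzero]
              rcases ih (p₁ ++ q₂) hlen' ⟨hp'chain, hp'head, hp'last⟩ with h | ⟨q, hq, hlt⟩
              · left; rw [hplen']; exact h
              · right; exact ⟨q, hq, by rw [hplen']; exact hlt⟩

/-- Lemma 1: adding an edge `(u,v)` with `l(u) + r(v) ≤ len(G)` does not change
the longest path length. -/
theorem stmt0 {V : Type*} [Fintype V] [DecidableEq V]
    (E : V → V → Prop) (c : V → ℝ) (src snk u v : V)
    (hacyc : ∀ w, ¬ Relation.TransGen E w w)
    (hc : ∀ w, 0 ≤ c w)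
    (hsrc : ∀ w, ¬ E w src) (hsnk : ∀ w, ¬ E snk w)
    (hpar : ¬ Relation.TransGen E u v ∧ ¬ Relation.TransGen E v u)
    (lu rv lenG lenG' : ℝ)
    (hlu : IsGreatest {x | ∃ p, IsPathFromTo E src u p ∧ plen c p = x} lu)
    (hrv : IsGreatest {x | ∃ p, IsPathFromTo E v snk p ∧ plen c p = x} rv)
    (hlen : IsGreatest {x | ∃ p, IsPathFromTo E src snk p ∧ plen c p = x} lenG)
    (hlen' : IsGreatest {x | ∃ p,
        IsPathFromTo (fun a b => E a b ∨ (a = u ∧ b = v)) src snk p ∧ plen c p = x} lenG')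
    (hle : lu + rv ≤ lenG) :
    lenG' = lenG := by
  have hEuv : ¬ E u v := fun h => hpar.1 (Relation.TransGen.single h)
  have hge : lenG ≤ lenG' := by
    obtain ⟨p, hp, hpl⟩ := hlen.1
    exact hlen'.2 ⟨p, ⟨hp.1.imp (fun a b h => Or.inl h), hp.2.1, hp.2.2⟩, hpl⟩
  obtain ⟨p, hp, hpl⟩ := hlen'.1
  rcases main_lemma hc hEuv hpar.2 (fun x hx => hlu.2 hx) (fun x hx => hrv.2 hx)
      (fun x hx => hlen.2 hx) hle p.length p le_rfl hp with h | ⟨q, hq, hlt⟩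
  · exact le_antisymm (hpl ▸ h) hge
  · exfalso
    have : plen c q ≤ lenG' := hlen'.2 ⟨q, hq, rfl⟩
    rw [hpl] at hlt
    linarith
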